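/- Let M be a free submodule of rank m of (ℤ/p^kℤ)^n and let v_1, …, v_r ∈ M (r < m) be linearly independent. Then there exist v_{r+1}, …, v_m ∈ M such that {v_1, …, v_m} is a basis of M (basis extension / Steinitz property). -/

import Mathlib

open Module

/-- Reduction map `ZMod (p^k) → ZMod p`. -/
def redMap (p k : ℕ) (hk : 1 ≤ k) : ZMod (p ^ k) →+* ZMod p :=
  ZMod.castHom (dvd_pow_self p (Nat.one_le_iff_ne_zero.mp hk)) (ZMod p)

lemma redMap_natCast {p k : ℕ} (hk : 1 ≤ k) (a : ℕ) :
    redMap p k hk (a : ZMod (p ^ k)) = (a : ZMod p) := by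
  simp [redMap]

lemma redMap_eq_zero_mul {p k : ℕ} (hp : p.Prime) (hk : 1 ≤ k) {x : ZMod (p ^ k)}
    (hx : redMap p k hk x = 0) : (p : ZMod (p ^ k)) ^ (k - 1) * x = 0 := by
  haveI : NeZero (p ^ k) := ⟨pow_ne_zero _ hp.pos.ne'⟩
  have hxv : ((x.val : ℕ) : ZMod (p ^ k)) = x := ZMod.natCast_zmod_val x
  have h1 : ((x.val : ℕ) : ZMod p) = 0 := by
    rw [← redMap_natCast hk, hxv]; exact hx
  obtain ⟨t, ht⟩ := (ZMod.natCast_eq_zero_iff _ _).mp h1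
  calc (p : ZMod (p ^ k)) ^ (k - 1) * x
      = ((p ^ (k - 1) * (p * t) : ℕ) : ZMod (p ^ k)) := by rw [← hxv, ht]; push_cast; ring
    _ = ((p ^ k * t : ℕ) : ZMod (p ^ k)) := by
        congr 1; rw [← mul_assoc, ← pow_succ, Nat.sub_add_cancel hk]
    _ = 0 := by
        rw [ZMod.natCast_eq_zero_iff]; exact Dvd.intro t rfl

lemma redMap_ne_zero_isUnit {p k : ℕ} (hp : p.Prime) (hk : 1 ≤ k) {x : ZMod (p ^ k)}
    (hx : redMap p k hk x ≠ 0) : IsUnit x := by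
  haveI : NeZero (p ^ k) := ⟨pow_ne_zero _ hp.pos.ne'⟩
  have hxv : ((x.val : ℕ) : ZMod (p ^ k)) = x := ZMod.natCast_zmod_val x
  have h1 : ¬ (p ∣ x.val) := by
    intro h
    apply hx
    rw [← hxv, redMap_natCast hk, ZMod.natCast_eq_zero_iff]
    exact h
  have hc : Nat.Coprime x.val (p ^ k) :=
    Nat.Coprime.pow_right k ((hp.coprime_iff_not_dvd.mpr h1).symm)
  rw [← hxv]
  exact (ZMod.isUnit_iff_coprime _ _).mpr hc

/-- Linear independence over `ZMod (p^k)` implies linear independence of the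
mod-`p` reductions. -/
lemma li_red {p k m s : ℕ} (hp : p.Prime) (hk : 1 ≤ k)
    {w : Fin s → Fin m → ZMod (p ^ k)}
    (hw : LinearIndependent (ZMod (p ^ k)) w) :
    LinearIndependent (ZMod p) (fun i j => redMap p k hk (w i j)) := by
  haveI : NeZero p := ⟨hp.pos.ne'⟩
  haveI : NeZero (p ^ k) := ⟨pow_ne_zero _ hp.pos.ne'⟩
  rw [Fintype.linearIndependent_iff] at hw ⊢
  intro c hc i
  set ct : Fin s → ZMod (p ^ k) := fun i => ((c i).val : ZMod (p ^ k)) with hct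
  have hred : ∀ i, redMap p k hk (ct i) = c i := fun i => by
    rw [hct, redMap_natCast hk, ZMod.natCast_zmod_val]
  have hsum : ∀ j, redMap p k hk ((∑ i, ct i • w i) j) = 0 := by
    intro j
    have := congrFun hc j
    simp only [Finset.sum_apply, Pi.smul_apply, smul_eq_mul] at this ⊢
    rw [map_sum]
    simpa [hred] using this
  have hz : ∑ i, ((p : ZMod (p ^ k)) ^ (k - 1) * ct i) • w i = 0 := by
    funext j
    simp only [Finset.sum_apply, Pi.smul_apply, smul_eq_mul, Pi.zero_apply]
    rw [show ∀ f : Fin s → ZMod (p ^ k), ∑ i, (p : ZMod (p^k)) ^ (k-1) * ct i * f i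
        = (p : ZMod (p^k)) ^ (k-1) * ∑ i, ct i * f i from
      fun f => by rw [Finset.mul_sum]; exact Finset.sum_congr rfl fun _ _ => by ring]
    have := redMap_eq_zero_mul hp hk (hsum j)
    simpa using this
  have h0 : ∀ i, (p : ZMod (p ^ k)) ^ (k - 1) * ct i = 0 := hw _ hz
  have hdvd : p ∣ (c i).val := by
    have := h0 i
    rw [hct] at this
    have h2 : ((p ^ (k - 1) * (c i).val : ℕ) : ZMod (p ^ k)) = 0 := by
      push_cast; exact this
    rw [ZMod.natCast_eq_zero_iff] at h2
    have h3 : p ^ (k - 1) * p ∣ p ^ (k - 1) * (c i).val := by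
      rw [← pow_succ, Nat.sub_add_cancel hk]; exact h2
    exact (mul_dvd_mul_iff_left (pow_ne_zero _ hp.pos.ne')).mp h3
  exact (ZMod.val_eq_zero _).mp (Nat.eq_zero_of_dvd_of_lt hdvd (ZMod.val_lt _))

/-- A family of `m` vectors in `(ZMod (p^k))^m` whose mod-`p` reductions are
linearly independent is a basis. -/
lemma basis_of_li_red {p k m : ℕ} (hp : p.Prime) (hk : 1 ≤ k)
    (w : Fin m → Fin m → ZMod (p ^ k))
    (hw : LinearIndependent (ZMod p) (fun i j => redMap p k hk (w i j))) :
    ∃ b : Basis (Fin m) (ZMod (p ^ k)) (Fin m → ZMod (p ^ k)), ∀ i, b i = w i := by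
  haveI : Fact p.Prime := ⟨hp⟩
  set K := ZMod p with hK
  set wb : Fin m → Fin m → K := fun i j => redMap p k hk (w i j) with hwb
  -- reductions span, hence form a basis over the field
  have hspan : Submodule.span K (Set.range wb) = ⊤ :=
    hw.span_eq_top_of_card_eq_finrank' (by simp [Module.finrank_fintype_fun_eq_card])
  -- determinant of reduced matrix is a unit
  set A : Matrix (Fin m) (Fin m) (ZMod (p ^ k)) := Matrix.of fun j i => w i j with hA
  set Ab : Matrix (Fin m) (Fin m) K := (redMap p k hk).mapMatrix A with hAb
  have hdet : IsUnit (((Pi.basisFun K (Fin m)).det) wb) :=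
    (Basis.is_basis_iff_det (Pi.basisFun K (Fin m))).mp ⟨hw, hspan⟩
  have hmat : ((Pi.basisFun K (Fin m)).det) wb = Ab.det := by
    rw [Basis.det_apply]
    congr 1
  have hdetA : IsUnit A.det := by
    apply redMap_ne_zero_isUnit hp hk
    rw [← RingHom.map_det] at hmat
    intro h0
    rw [hmat, h0] at hdet
    simp at hdet
  -- build the basis over R
  let inv : Invertible A := A.invertibleOfIsUnitDet hdetA
  let e : (Fin m → ZMod (p ^ k)) ≃ₗ[ZMod (p ^ k)] (Fin m → ZMod (p ^ k)) := A.toLinearEquiv' inv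
  refine ⟨(Pi.basisFun (ZMod (p ^ k)) (Fin m)).map e, fun i => ?_⟩
  have : e ((Pi.basisFun (ZMod (p ^ k)) (Fin m)) i) = A.mulVec (Pi.single i 1) := by
    have := Matrix.toLinearEquiv'_apply A inv
    simp [e, Matrix.toLinearEquiv', Matrix.toLin'_apply, Pi.basisFun_apply]
  simp only [Basis.map_apply, this]
  funext j
  simp [Matrix.mulVec_single, hA]

/-- Key extension lemma in the free module `(ZMod (p^k))^m`. -/
lemma extend_aux {p k m : ℕ} (hp : p.Prime) (hk : 1 ≤ k) :
    ∀ t s (hsm : s + t = m), ∀ w : Fin s → Fin m → ZMod (p ^ k),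
      LinearIndependent (ZMod p) (fun i j => redMap p k hk (w i j)) →
      ∃ b : Basis (Fin m) (ZMod (p ^ k)) (Fin m → ZMod (p ^ k)),
        ∀ i : Fin s, b (Fin.castLE (by omega) i) = w i := by
  haveI : Fact p.Prime := ⟨hp⟩
  haveI : NeZero p := ⟨hp.pos.ne'⟩
  intro t
  induction t with
  | zero =>
    intro s hs w hw
    subst hs
    obtain ⟨b, hb⟩ := basis_of_li_red hp hk w hw
    exact ⟨b, fun i => hb i⟩
  | succ t ih =>
    intro s hs w hw
    -- reductions don't span, pick x outside
    set K := ZMod p with hK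
    set wb : Fin s → Fin m → K := fun i j => redMap p k hk (w i j) with hwb
    have hne : Submodule.span K (Set.range wb) ≠ ⊤ := by
      intro htop
      have h1 : finrank K (Submodule.span K (Set.range wb)) = s := by
        simpa using finrank_span_eq_card hw
      rw [htop] at h1
      rw [finrank_top, Module.finrank_fintype_fun_eq_card] at h1
      simp at h1
      omega
    obtain ⟨xb, hxb⟩ : ∃ xb, xb ∉ Submodule.span K (Set.range wb) := by
      by_contra h
      push_neg at h
      exact hne (eq_top_iff.mpr fun x _ => h x)
    -- lift x
    set x : Fin m → ZMod (p ^ k) := fun j => (((xb j).val : ℕ) : ZMod (p ^ k)) with hx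
    have hxred : ∀ j, redMap p k hk (x j) = xb j := fun j => by
      rw [hx, redMap_natCast hk, ZMod.natCast_zmod_val]
    have hsnoc : LinearIndependent K
        (fun i j => redMap p k hk ((Fin.snoc w x : Fin (s+1) → Fin m → ZMod (p^k)) i j)) := by
      have heq : (fun i j => redMap p k hk ((Fin.snoc w x : Fin (s+1) → _) i j))
          = Fin.snoc wb xb := by
        funext i
        refine Fin.lastCases ?_ (fun i0 => ?_) i
        · funext j; simp [hxred j]
        · funext j; simp [hwb]
      rw [heq, linearIndependent_fin_snoc]
      exact ⟨hw, hxb⟩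
    obtain ⟨b, hb⟩ := ih (s + 1) (by omega) (Fin.snoc w x) hsnoc
    refine ⟨b, fun i => ?_⟩
    have h1 := hb (Fin.castSucc i)
    rw [Fin.snoc_castSucc] at h1
    exact h1

/-- Basis extension (Steinitz property) over `ℤ/p^kℤ`: if `M` is a free
submodule of rank `m` of `(ℤ/p^kℤ)^n` and `v_1, …, v_r ∈ M` (`r < m`) are
linearly independent, then they extend to a basis of `M`. -/
theorem linearIndependent_extends_to_basis
    {p k m n r : ℕ} (hp : p.Prime) (hk : 1 ≤ k) (hrm : r < m)
    (M : Submodule (ZMod (p ^ k)) (Fin n → ZMod (p ^ k)))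
    (hfree : Nonempty (M ≃ₗ[ZMod (p ^ k)] (Fin m → ZMod (p ^ k))))
    (v : Fin r → Fin n → ZMod (p ^ k)) (hv : ∀ i, v i ∈ M)
    (hli : LinearIndependent (ZMod (p ^ k)) v) :
    ∃ b : Basis (Fin m) (ZMod (p ^ k)) M,
      ∀ i : Fin r, (b (Fin.castLE hrm.le i) : Fin n → ZMod (p ^ k)) = v i := by
  obtain ⟨e⟩ := hfree
  set vM : Fin r → M := fun i => ⟨v i, hv i⟩ with hvM
  have hliM : LinearIndependent (ZMod (p ^ k)) vM :=
    LinearIndependent.of_comp M.subtype hli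
  set w : Fin r → Fin m → ZMod (p ^ k) := fun i => e (vM i) with hw
  have hliw : LinearIndependent (ZMod (p ^ k)) w :=
    hliM.map' e.toLinearMap e.ker
  have hred := li_red hp hk hliw
  obtain ⟨b0, hb0⟩ := extend_aux hp hk (m - r) r (by omega) w hred
  refine ⟨b0.map e.symm, fun i => ?_⟩
  have h1 : b0 (Fin.castLE hrm.le i) = w i := hb0 i
  rw [Basis.map_apply, h1, hw]
  simp [vM]
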